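/- For the windmill graph Wd(r,t) on n = t(r−1)+1 vertices and 2 ≤ k ≤ n, SW_k(Wd(r,t)) = (n−1)·C(n−1,k−1) − t·C(r−1,k). -/

import Mathlib

open SimpleGraph Finset
open scoped Classical

/-- The Steiner distance of a vertex set `S` in `G`: the minimum number of edges of a
connected subgraph of `G` whose vertex set contains `S`. -/
noncomputable def steinerDist {V : Type*} (G : SimpleGraph V) (S : Set V) : ℕ :=
  sInf {m | ∃ H : G.Subgraph, H.Connected ∧ S ⊆ H.verts ∧ H.edgeSet.ncard = m}

/-- The Steiner `k`-Wiener index: the sum of Steiner distances over all `k`-element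
vertex subsets. -/
noncomputable def steinerWiener {V : Type*} [Fintype V] (G : SimpleGraph V) (k : ℕ) : ℕ :=
  ∑ S ∈ Finset.powersetCard k (Finset.univ : Finset V), steinerDist G (↑S : Set V)

/-- `v` is a cut vertex of `G`: `G` is connected but deleting `v` disconnects it. -/
def IsCutVertex {V : Type*} (G : SimpleGraph V) (v : V) : Prop :=
  G.Connected ∧ ¬ (G.induce {u | u ≠ v}).Connected

/-- The induced subgraph on `B` is connected and has no cut vertex. -/
def IsBiconnectedSet {V : Type*} (G : SimpleGraph V) (B : Set V) : Prop :=
  (G.induce B).Connected ∧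
    ∀ v ∈ B, (B \ {v}).Nonempty → (G.induce (B \ {v})).Connected

/-- `B` is a block of `G`: a maximal set inducing a connected subgraph without cut
vertex (with at least two vertices). -/
def IsBlock {V : Type*} (G : SimpleGraph V) (B : Set V) : Prop :=
  2 ≤ B.ncard ∧ IsBiconnectedSet G B ∧
    ∀ B' : Set V, B ⊆ B' → 2 ≤ B'.ncard → IsBiconnectedSet G B' → B' = B

/-- A block graph: a connected graph in which every block is a clique. -/
def IsBlockGraph {V : Type*} (G : SimpleGraph V) : Prop :=
  G.Connected ∧ ∀ B : Set V, IsBlock G B → G.IsClique B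

/-- The windmill graph Wd(r,t): t copies of K_r joined at a shared vertex. -/
def windmill (r t : ℕ) : SimpleGraph (Option (Fin t × Fin (r - 1))) :=
  SimpleGraph.fromRel (fun x y =>
    x = none ∨ y = none ∨ ∃ i a b, x = some (i, a) ∧ y = some (i, b))

section General

variable {W : Type*}

/-- Star subgraph: center `c`, leaves `S`. -/
def starSub (G : SimpleGraph W) (c : W) (S : Set W)
    (h : ∀ v ∈ S, v ≠ c → G.Adj c v) : G.Subgraph where
  verts := insert c S
  Adj x y := (x = c ∧ y ∈ S ∧ y ≠ c) ∨ (y = c ∧ x ∈ S ∧ x ≠ c)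
  adj_sub := by
    rintro x y (⟨rfl, hy, hy'⟩ | ⟨rfl, hx, hx'⟩)
    · exact h y hy hy'
    · exact (h x hx hx').symm
  edge_vert := by
    rintro x y (⟨rfl, hy, _⟩ | ⟨rfl, hx, hx'⟩)
    · exact Set.mem_insert _ _
    · exact Set.mem_insert_of_mem _ hx
  symm := by
    refine ⟨?_⟩; rintro x y (h' | h')
    · exact Or.inr h'
    · exact Or.inl h'

lemma starSub_connected (G : SimpleGraph W) (c : W) (S : Set W)
    (h : ∀ v ∈ S, v ≠ c → G.Adj c v) : (starSub G c S h).Connected := by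
  rw [SimpleGraph.Subgraph.connected_iff']
  have hc : c ∈ (starSub G c S h).verts := Set.mem_insert _ _
  have key : ∀ z : (starSub G c S h).verts, (starSub G c S h).coe.Reachable z ⟨c, hc⟩ := by
    rintro ⟨z, hz⟩
    rcases eq_or_ne z c with rfl | hzc
    · rfl
    · have hzS : z ∈ S := by
        rcases hz with h1 | h1
        · exact absurd h1 hzc
        · exact h1
      exact SimpleGraph.Adj.reachable (Or.inr ⟨rfl, hzS, hzc⟩)
  haveI : Nonempty (starSub G c S h).verts := ⟨⟨c, hc⟩⟩
  exact SimpleGraph.Connected.mk fun x y => (key x).trans (key y).symm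

lemma starSub_edgeSet (G : SimpleGraph W) (c : W) (S : Set W)
    (h : ∀ v ∈ S, v ≠ c → G.Adj c v) :
    (starSub G c S h).edgeSet = (fun v => s(c, v)) '' (S \ {c}) := by
  ext e
  induction e using Sym2.ind with
  | _ x y =>
    rw [SimpleGraph.Subgraph.mem_edgeSet]
    constructor
    · rintro (⟨rfl, hy, hy'⟩ | ⟨rfl, hx, hx'⟩)
      · exact ⟨y, ⟨hy, hy'⟩, rfl⟩
      · exact ⟨x, ⟨hx, hx'⟩, Sym2.eq_swap⟩
    · rintro ⟨v, ⟨hv, hv'⟩, he⟩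
      rw [Sym2.eq_iff] at he
      rcases he with ⟨rfl, rfl⟩ | ⟨rfl, rfl⟩
      · exact Or.inl ⟨rfl, hv, hv'⟩
      · exact Or.inr ⟨rfl, hv, hv'⟩

lemma starSub_edgeSet_ncard (G : SimpleGraph W) (c : W) (S : Set W)
    (h : ∀ v ∈ S, v ≠ c → G.Adj c v) :
    (starSub G c S h).edgeSet.ncard = (S \ {c}).ncard := by
  rw [starSub_edgeSet]
  apply Set.ncard_image_of_injective
  intro a b hab
  rw [Sym2.eq_iff] at hab
  rcases hab with ⟨-, rfl⟩ | ⟨rfl, rfl⟩ <;> rfl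

/-- A connected graph on a finite type has at least `card - 1` edges. -/
lemma card_le_ncard_edgeSet_add_one [Fintype W] (G : SimpleGraph W) (hG : G.Connected) :
    Fintype.card W ≤ G.edgeSet.ncard + 1 := by
  obtain ⟨r⟩ : Nonempty W := hG.nonempty
  have key : ∀ v : W, v ≠ r → ∃ w, G.Adj v w ∧ G.dist w r + 1 = G.dist v r := by
    intro v hv
    obtain ⟨p, hp⟩ := (hG v r).exists_walk_length_eq_dist
    obtain ⟨w, ha, q, rfl⟩ := SimpleGraph.Walk.exists_eq_cons_of_ne hv p
    have h1 : G.dist w r ≤ q.length := SimpleGraph.dist_le q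
    have h2 : G.dist v r ≤ G.dist v w + G.dist w r := hG.dist_triangle
    have h3 : G.dist v w = 1 := SimpleGraph.dist_eq_one_iff_adj.mpr ha
    simp only [SimpleGraph.Walk.length_cons] at hp
    exact ⟨w, ha, by omega⟩
  set f : W → Sym2 W := fun v =>
    if h : v = r then s(r, r) else s(v, (key v h).choose) with hf
  have hmaps : ∀ v ∈ {v : W | v ≠ r}, f v ∈ G.edgeSet := by
    intro v hv
    simp only [hf, dif_neg hv]
    exact (key v hv).choose_spec.1
  have hinj : Set.InjOn f {v : W | v ≠ r} := by
    intro a ha b hb hab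
    simp only [hf, dif_neg ha, dif_neg hb, Sym2.eq_iff] at hab
    rcases hab with ⟨h1, -⟩ | ⟨h1, h2⟩
    · exact h1
    · exfalso
      have sa := (key a ha).choose_spec.2
      have sb := (key b hb).choose_spec.2
      rw [h2] at sa
      rw [← h1] at sb
      omega
  have h1 : ({v : W | v ≠ r}).ncard ≤ G.edgeSet.ncard := by
    rw [← Set.ncard_image_of_injOn hinj]
    exact Set.ncard_le_ncard (Set.image_subset_iff.mpr hmaps) (Set.toFinite _)
  have h2 : ({v : W | v ≠ r}).ncard + ({r} : Set W).ncard = Fintype.card W := by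
    have h := Set.ncard_add_ncard_compl ({r} : Set W) (Set.toFinite _) (Set.toFinite _)
    have hc : ({r} : Set W)ᶜ = {v : W | v ≠ r} := by ext x; simp
    rw [hc, Nat.card_eq_fintype_card] at h
    omega
  simp only [Set.ncard_singleton] at h2
  omega

lemma subgraph_verts_le {G : SimpleGraph W} [Fintype W] (H : G.Subgraph) (hH : H.Connected) :
    H.verts.ncard ≤ H.edgeSet.ncard + 1 := by
  have h1 : Fintype.card H.verts ≤ H.coe.edgeSet.ncard + 1 :=
    card_le_ncard_edgeSet_add_one H.coe hH.coe
  have h2 : H.coe.edgeSet.ncard = H.edgeSet.ncard := by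
    rw [← SimpleGraph.Subgraph.image_coe_edgeSet_coe]
    exact (Set.ncard_image_of_injective _ (Sym2.map.injective Subtype.val_injective)).symm
  have h3 : H.verts.ncard = Fintype.card H.verts := by
    rw [Set.ncard_eq_toFinset_card']
    exact Set.toFinset_card _
  omega

lemma steinerDist_eq {G : SimpleGraph W} {S : Set W} {d : ℕ}
    (hub : ∃ H : G.Subgraph, H.Connected ∧ S ⊆ H.verts ∧ H.edgeSet.ncard = d)
    (hlb : ∀ H : G.Subgraph, H.Connected → S ⊆ H.verts → d ≤ H.edgeSet.ncard) :
    steinerDist G S = d := by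
  refine le_antisymm (Nat.sInf_le hub) (le_csInf ⟨d, hub⟩ ?_)
  rintro m ⟨H, h1, h2, rfl⟩
  exact hlb H h1 h2

end General

section Windmill

variable {r t : ℕ}

abbrev WV (r t : ℕ) := Option (Fin t × Fin (r - 1))

lemma windmill_adj_none (p : Fin t × Fin (r - 1)) : (windmill r t).Adj none (some p) := by
  rw [windmill, SimpleGraph.fromRel_adj]
  exact ⟨by simp, Or.inl (Or.inl rfl)⟩

lemma windmill_adj_some {p q : Fin t × Fin (r - 1)} (hne : p ≠ q) (h : p.1 = q.1) :
    (windmill r t).Adj (some p) (some q) := by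
  rw [windmill, SimpleGraph.fromRel_adj]
  refine ⟨by simpa using hne, Or.inl (Or.inr (Or.inr ⟨p.1, p.2, q.2, rfl, ?_⟩))⟩
  rw [h]

lemma windmill_adj_some_imp {p q : Fin t × Fin (r - 1)}
    (h : (windmill r t).Adj (some p) (some q)) : p.1 = q.1 := by
  rw [windmill, SimpleGraph.fromRel_adj] at h
  obtain ⟨-, h⟩ := h
  rcases h with (h | h | ⟨i, a, b, h1, h2⟩) | (h | h | ⟨i, a, b, h1, h2⟩)
  · exact absurd h (by simp)
  · exact absurd h (by simp)
  · rw [Option.some_inj] at h1 h2; rw [h1, h2]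
  · exact absurd h (by simp)
  · exact absurd h (by simp)
  · rw [Option.some_inj] at h1 h2; rw [h1, h2]

/-- If a connected subgraph of the windmill contains vertices of two different blades,
it contains the center. -/
lemma windmill_sep (H : (windmill r t).Subgraph) (hH : H.Connected)
    {p q : Fin t × Fin (r - 1)} (hp : some p ∈ H.verts) (hq : some q ∈ H.verts)
    (hne : p.1 ≠ q.1) : none ∈ H.verts := by
  by_contra hn
  set F : WV r t → Fin t := fun v => (v.map Prod.fst).getD p.1 with hF
  have key : ∀ x y : H.verts, H.coe.Adj x y → F x.val = F y.val := by
    rintro ⟨x, hx⟩ ⟨y, hy⟩ hadj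
    have hadj' : (windmill r t).Adj x y := H.adj_sub hadj
    match x, y with
    | none, _ => exact absurd hx hn
    | _, none => exact absurd hy hn
    | some u, some w =>
      have := windmill_adj_some_imp hadj'
      simp [hF, this]
  have reach : ∀ x y : H.verts, H.coe.Reachable x y → F x.val = F y.val := by
    intro x y hxy
    obtain ⟨w⟩ := hxy
    induction w with
    | nil => rfl
    | cons h w ih => exact (key _ _ h).trans ih
  have := reach ⟨some p, hp⟩ ⟨some q, hq⟩ (hH.coe.preconnected _ _)
  simp [hF] at this
  exact hne this

end Windmill

lemma choose_id (m k : ℕ) (hk : 2 ≤ k) (hk' : k ≤ m + 1) :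
    (k - 1) * (m + 1).choose k + m.choose k = m * m.choose (k - 1) := by
  obtain ⟨k', rfl⟩ : ∃ k', k = k' + 1 := ⟨k - 1, by omega⟩
  simp only [Nat.add_sub_cancel]
  have h1 : (m + 1).choose (k' + 1) = m.choose k' + m.choose (k' + 1) :=
    Nat.choose_succ_succ m k'
  have h2 : (m + 1) * m.choose k' = (m + 1).choose (k' + 1) * (k' + 1) :=
    Nat.add_one_mul_choose_eq m k'
  nlinarith [h1, h2]

section Cases

variable {r t : ℕ}

/-- Blade `i` of the windmill as a finset. -/
def bladeF (r t : ℕ) (i : Fin t) : Finset (WV r t) :=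
  (univ : Finset (Fin (r - 1))).image (fun a => some (i, a))

lemma mem_bladeF {i : Fin t} {x : WV r t} : x ∈ bladeF r t i ↔ ∃ a, x = some (i, a) := by
  simp [bladeF, eq_comm]

lemma card_bladeF (i : Fin t) : (bladeF r t i).card = r - 1 := by
  rw [bladeF, Finset.card_image_of_injective _ (fun a b hab => by simpa using hab)]
  simp

lemma lb_basic {S : Finset (WV r t)} (H : (windmill r t).Subgraph) (hH : H.Connected)
    (hsub : (↑S : Set (WV r t)) ⊆ H.verts) : S.card ≤ H.edgeSet.ncard + 1 := by
  have h1 : (↑S : Set (WV r t)).ncard ≤ H.verts.ncard :=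
    Set.ncard_le_ncard hsub (Set.toFinite _)
  have h2 := subgraph_verts_le H hH
  rw [Set.ncard_coe_finset] at h1
  omega

lemma steinerDist_caseA {S : Finset (WV r t)} (hS : none ∈ S) :
    steinerDist (windmill r t) ↑S = S.card - 1 := by
  have hadj2 : ∀ v ∈ (↑S : Set (WV r t)), v ≠ none → (windmill r t).Adj none v := by
    intro v _ hne
    cases v with
    | none => exact absurd rfl hne
    | some p => exact windmill_adj_none p
  refine steinerDist_eq ⟨starSub _ none ↑S hadj2, starSub_connected _ _ _ _,
    Set.subset_insert _ _, ?_⟩ ?_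
  · rw [starSub_edgeSet_ncard, ← Finset.coe_erase, Set.ncard_coe_finset,
      Finset.card_erase_of_mem hS]
  · intro H hH hsub
    have := lb_basic H hH hsub
    omega

lemma steinerDist_caseB {S : Finset (WV r t)} (hne : S.Nonempty) {i : Fin t}
    (hblade : S ⊆ bladeF r t i) :
    steinerDist (windmill r t) ↑S = S.card - 1 := by
  obtain ⟨c, hc⟩ := hne
  have hadj : ∀ v ∈ (↑S : Set (WV r t)), v ≠ c → (windmill r t).Adj c v := by
    intro v hv hvc
    obtain ⟨a, rfl⟩ := mem_bladeF.mp (hblade hv)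
    obtain ⟨b, rfl⟩ := mem_bladeF.mp (hblade hc)
    exact windmill_adj_some (fun h => hvc (by rw [h])) rfl
  refine steinerDist_eq ⟨starSub _ c ↑S hadj, starSub_connected _ _ _ _,
    Set.subset_insert _ _, ?_⟩ ?_
  · rw [starSub_edgeSet_ncard, ← Finset.coe_erase, Set.ncard_coe_finset,
      Finset.card_erase_of_mem hc]
  · intro H hH hsub
    have := lb_basic H hH hsub
    omega

lemma steinerDist_caseC {S : Finset (WV r t)} (hne : S.Nonempty) (hn : none ∉ S)
    (hblade : ¬ ∃ i, S ⊆ bladeF r t i) :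
    steinerDist (windmill r t) ↑S = S.card := by
  have hadj2 : ∀ v ∈ (↑S : Set (WV r t)), v ≠ none → (windmill r t).Adj none v := by
    intro v _ hne'
    cases v with
    | none => exact absurd rfl hne'
    | some p => exact windmill_adj_none p
  refine steinerDist_eq ⟨starSub _ none ↑S hadj2, starSub_connected _ _ _ _,
    Set.subset_insert _ _, ?_⟩ ?_
  · rw [starSub_edgeSet_ncard]
    have : (↑S : Set (WV r t)) \ {none} = ↑S := by
      apply Set.diff_singleton_eq_self
      simpa using hn
    rw [this, Set.ncard_coe_finset]
  · intro H hH hsub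
    -- find two blades
    obtain ⟨x, hx⟩ := hne
    obtain ⟨p, rfl⟩ : ∃ p, x = some p := by
      cases x with
      | none => exact absurd hx hn
      | some p => exact ⟨p, rfl⟩
    obtain ⟨y, hy, hy'⟩ := Finset.not_subset.mp (fun h => hblade ⟨p.1, h⟩)
    obtain ⟨q, rfl⟩ : ∃ q, y = some q := by
      cases y with
      | none => exact absurd hy hn
      | some q => exact ⟨q, rfl⟩
    have hq1 : q.1 ≠ p.1 := by
      intro h
      exact hy' (mem_bladeF.mpr ⟨q.2, by rw [← h]⟩)
    have hnone : none ∈ H.verts :=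
      windmill_sep H hH (hsub (by exact_mod_cast hy)) (hsub (by exact_mod_cast hx)) hq1
    have hsub' : (↑(insert none S) : Set (WV r t)) ⊆ H.verts := by
      rw [Finset.coe_insert]
      exact Set.insert_subset hnone hsub
    have := lb_basic H hH hsub'
    rw [Finset.card_insert_of_notMem hn] at this
    omega

end Cases

/-- Steiner k-Wiener index of the windmill graph, n = t(r-1)+1:
SW_k(Wd(r,t)) = (n-1)*C(n-1,k-1) - t*C(r-1,k), stated additively. -/
theorem stmt11 (r t : ℕ) (hr : 2 ≤ r) (ht : 2 ≤ t) (k : ℕ)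
    (hk : 2 ≤ k) (hk' : k ≤ t * (r - 1) + 1) :
    steinerWiener (windmill r t) k + t * (r - 1).choose k
      = (t * (r - 1)) * (t * (r - 1)).choose (k - 1) := by
  set m := t * (r - 1) with hm
  have hcardV : Fintype.card (WV r t) = m + 1 := by
    simp [hm, mul_comm]
  set P := Finset.powersetCard k (Finset.univ : Finset (WV r t)) with hP
  set Bad : Finset (WV r t) → Prop :=
    fun S => none ∉ S ∧ ¬ ∃ i, S ⊆ bladeF r t i with hBad
  have hval : ∀ S ∈ P, steinerDist (windmill r t) ↑S
      = (k - 1) + (if Bad S then 1 else 0) := by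
    intro S hSP
    have hScard : S.card = k := (Finset.mem_powersetCard_univ).mp hSP
    have hSne : S.Nonempty := Finset.card_pos.mp (by omega)
    by_cases h1 : none ∈ S
    · rw [steinerDist_caseA h1, if_neg (fun hb => hb.1 h1), hScard]
      omega
    · by_cases h2 : ∃ i, S ⊆ bladeF r t i
      · obtain ⟨i, hi⟩ := h2
        rw [steinerDist_caseB hSne hi, if_neg (fun hb => hb.2 ⟨i, hi⟩), hScard]
        omega
      · rw [steinerDist_caseC hSne h1 h2, if_pos ⟨h1, h2⟩, hScard]
        omega
  have hsum : steinerWiener (windmill r t) k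
      = (k - 1) * P.card + (P.filter Bad).card := by
    rw [steinerWiener, Finset.sum_congr rfl hval, Finset.sum_add_distrib,
      Finset.sum_const, smul_eq_mul, Finset.card_filter, mul_comm]
  have hPcard : P.card = (m + 1).choose k := by
    rw [hP, Finset.card_powersetCard, Finset.card_univ, hcardV]
  -- the count of bad sets
  set Q := Finset.powersetCard k ((Finset.univ : Finset (WV r t)).erase none) with hQ
  have hQE : ((Finset.univ : Finset (WV r t)).erase none).card = m := by
    rw [Finset.card_erase_of_mem (Finset.mem_univ _), Finset.card_univ, hcardV]
    omega
  have hQcard : Q.card = m.choose k := by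
    rw [hQ, Finset.card_powersetCard, hQE]
  have hPQ : P.filter Bad = Q.filter (fun S => ¬ ∃ i, S ⊆ bladeF r t i) := by
    ext S
    simp only [hP, hQ, hBad, Finset.mem_filter, Finset.mem_powersetCard,
      Finset.subset_erase, Finset.subset_univ, true_and]
    tauto
  have hQgood : (Q.filter (fun S => ∃ i, S ⊆ bladeF r t i)).card = t * (r - 1).choose k := by
    have heq : Q.filter (fun S => ∃ i, S ⊆ bladeF r t i)
        = (Finset.univ : Finset (Fin t)).biUnion
            (fun i => Finset.powersetCard k (bladeF r t i)) := by
      ext S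
      simp only [hQ, Finset.mem_filter, Finset.mem_powersetCard, Finset.mem_biUnion,
        Finset.mem_univ, true_and]
      constructor
      · rintro ⟨⟨-, hcard⟩, i, hi⟩
        exact ⟨i, hi, hcard⟩
      · rintro ⟨i, hi, hcard⟩
        refine ⟨⟨Finset.subset_erase.mpr ⟨Finset.subset_univ _, fun hnS => ?_⟩, hcard⟩, i, hi⟩
        obtain ⟨a, ha⟩ := mem_bladeF.mp (hi hnS)
        exact absurd ha (by simp)
    have hdisj : ∀ i ∈ (Finset.univ : Finset (Fin t)), ∀ j ∈ Finset.univ, i ≠ j →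
        Disjoint (Finset.powersetCard k (bladeF r t i))
          (Finset.powersetCard k (bladeF r t j)) := by
      rintro i - j - hij
      rw [Finset.disjoint_left]
      intro S hSi hSj
      rw [Finset.mem_powersetCard] at hSi hSj
      have hSne : S.Nonempty := Finset.card_pos.mp (by omega)
      obtain ⟨x, hx⟩ := hSne
      obtain ⟨a, rfl⟩ := mem_bladeF.mp (hSi.1 hx)
      obtain ⟨b, hb⟩ := mem_bladeF.mp (hSj.1 hx)
      exact hij (by simpa using congrArg (fun o => (Option.map Prod.fst o).getD i) hb)
    rw [heq, Finset.card_biUnion hdisj]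
    simp only [Finset.card_powersetCard, card_bladeF]
    rw [Finset.sum_const, Finset.card_univ, Fintype.card_fin, smul_eq_mul]
  have hQsplit : #(Q.filter (fun S => ∃ i, S ⊆ bladeF r t i))
      + #(Q.filter (fun S => ¬ ∃ i, S ⊆ bladeF r t i)) = #Q :=
    Finset.card_filter_add_card_filter_not _
  rw [hsum, hPQ, hPcard]
  have hbadcard : (Q.filter (fun S => ¬ ∃ i, S ⊆ bladeF r t i)).card
      + t * (r - 1).choose k = m.choose k := by
    omega
  have := choose_id m k hk hk'
  omega
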